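/- Let G be a chordal graph and let T ⊆ V(G) be a set of terminal vertices. A vertex subset S ⊆ V(G) is a subset feedback vertex set of G with respect to T if and only if the induced subgraph G − S contains no T-triangle. -/

import Mathlib

open SimpleGraph

variable {V : Type*}

/-- A `T`-triangle, represented as its vertex set: three pairwise adjacent
vertices at least one of which is a terminal. -/
def IsTTriangle (G : SimpleGraph V) (T Δ : Set V) : Prop :=
  ∃ a b c : V, Δ = {a, b, c} ∧ G.Adj a b ∧ G.Adj a c ∧ G.Adj b c ∧
    (a ∈ T ∨ b ∈ T ∨ c ∈ T)

/-- The induced subgraph `G − S` contains a `T`-triangle. -/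
def HasTTriangleAvoiding (G : SimpleGraph V) (T S : Set V) : Prop :=
  ∃ Δ : Set V, IsTTriangle G T Δ ∧ Δ ∩ S = ∅

/-- The induced subgraph `G − S` contains a `T`-cycle: a cycle of `G` avoiding
`S` and passing through a vertex of `T`. -/
def HasTCycleAvoiding (G : SimpleGraph V) (T S : Set V) : Prop :=
  ∃ (v : V) (c : G.Walk v v), c.IsCycle ∧ (∀ x ∈ c.support, x ∉ S) ∧
    ∃ t ∈ T, t ∈ c.support

/-- `S` is a subset feedback vertex set of `G` with respect to `T`:
`G − S` contains no `T`-cycle. -/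
def IsSubsetFVS (G : SimpleGraph V) (T S : Set V) : Prop :=
  ¬ HasTCycleAvoiding G T S

/-- A cycle has a chord: an edge of `G` between two vertices of the cycle
which is not an edge of the cycle. -/
def WalkHasChord (G : SimpleGraph V) {v : V} (c : G.Walk v v) : Prop :=
  ∃ x y : V, x ∈ c.support ∧ y ∈ c.support ∧ G.Adj x y ∧ s(x, y) ∉ c.edges

/-- A graph is chordal if every cycle of length at least four has a chord. -/
def Chordal (G : SimpleGraph V) : Prop :=
  ∀ (v : V) (c : G.Walk v v), c.IsCycle → 4 ≤ c.length → WalkHasChord G c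

/-- A bridge: an edge lying on no cycle of the graph. -/
def IsBridgeEdge (G : SimpleGraph V) (e : Sym2 V) : Prop :=
  e ∈ G.edgeSet ∧ ∀ (v : V) (c : G.Walk v v), c.IsCycle → e ∉ c.edges

/-- `(K, I)` is a split partition of `G`: `K` is a clique, `I` an independent
set, and they partition the vertex set. -/
def IsSplitPartition (G : SimpleGraph V) (K I : Set V) : Prop :=
  K ∪ I = Set.univ ∧ K ∩ I = ∅ ∧ G.IsClique K ∧ I.Pairwise fun a b => ¬ G.Adj a b

/-- The closed neighbourhood `N[v]` of a vertex. -/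
def closedNbhd (G : SimpleGraph V) (v : V) : Set V := insert v (G.neighborSet v)

/-- A vertex is simplicial if its closed neighbourhood is a clique. -/
def IsSimplicial (G : SimpleGraph V) (v : V) : Prop := G.IsClique (closedNbhd G v)

/-- A maximal clique. -/
def IsMaxClique (G : SimpleGraph V) (C : Set V) : Prop :=
  G.IsClique C ∧ ∀ C' : Set V, G.IsClique C' → C ⊆ C' → C' = C

/-- A matching, as a set of edges of `G` no two of which share an endvertex. -/
def IsEdgeMatching (G : SimpleGraph V) (M : Set (Sym2 V)) : Prop :=
  M ⊆ G.edgeSet ∧ ∀ e ∈ M, ∀ f ∈ M, e ≠ f → ∀ z : V, z ∈ e → z ∉ f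

/-- A set of edges saturates a vertex if some edge of it is incident with it. -/
def Saturates (M : Set (Sym2 V)) (z : V) : Prop := ∃ e ∈ M, z ∈ e

/-- `M` is a `t`-expansion of `X` into `Y`: every edge of `M` goes between `X`
and `Y`, every vertex of `X` is incident with exactly `t` edges of `M`, and the
edges of `M` are incident with exactly `t * |X|` distinct vertices of `Y`. -/
def IsExpansion (G : SimpleGraph V) (t : ℕ) (X Y : Set V) (M : Set (Sym2 V)) : Prop :=
  M ⊆ G.edgeSet ∧ (∀ e ∈ M, ∃ x ∈ X, ∃ y ∈ Y, e = s(x, y)) ∧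
    (∀ x ∈ X, {e ∈ M | x ∈ e}.ncard = t) ∧
    {y ∈ Y | Saturates M y}.ncard = t * X.ncard

private lemma aux_edge_of_length_one {G : SimpleGraph V} {a b : V} (w : G.Walk a b)
    (h : w.length = 1) : s(a, b) ∈ w.edges := by
  cases w with
  | nil => simp at h
  | cons hadj w' =>
    cases w' with
    | nil => simp
    | cons _ _ => simp [SimpleGraph.Walk.length_cons] at h

private lemma aux_end_mem_tail {G : SimpleGraph V} {u v : V} (w : G.Walk u v)
    (h : w.length ≠ 0) : v ∈ w.support.tail := by
  cases w with
  | nil => simp at h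
  | cons hadj w' => simp only [SimpleGraph.Walk.support_cons, List.tail_cons]; exact w'.end_mem_support

/-- Key lemma: a cycle through a terminal avoiding `S` in a chordal graph
yields a `T`-triangle avoiding `S`. -/
private lemma aux_key {G : SimpleGraph V} {T S : Set V} (hG : Chordal G) :
    ∀ (n : ℕ) (v : V) (c : G.Walk v v), c.IsCycle → c.length = n →
      (∀ x ∈ c.support, x ∉ S) → (∃ t ∈ T, t ∈ c.support) →
      HasTTriangleAvoiding G T S := by
  classical
  intro n
  induction n using Nat.strong_induction_on with
  | _ n ih =>
  intro v c hc hlen hS ht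
  obtain ⟨t, htT, hts⟩ := ht
  by_cases h4 : 4 ≤ c.length
  · -- long cycle: use a chord to split into two shorter cycles
    obtain ⟨x, y, hx, hy, hxy, hchord⟩ := hG v c hc h4
    set c' : G.Walk x x := c.rotate x hx with hc'def
    have hc'cyc : c'.IsCycle := hc.rotate hx
    have htail : c'.support.tail ~r c.support.tail := c.support_rotate x hx
    have hedges : c'.edges ~r c.edges := c.rotate_edges x hx
    -- membership transfer between c and c'
    have hmem : ∀ a : V, a ∈ c'.support ↔ a ∈ c.support := by
      intro a
      have hlc : c.length ≠ 0 := by omega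
      have hlc' : c'.length ≠ 0 := by
        have := hc'cyc.three_le_length; omega
      rw [c.support_eq_cons, c'.support_eq_cons]
      simp only [List.mem_cons, htail.mem_iff]
      constructor
      · rintro (rfl | h)
        · right; exact htail.mem_iff.mp (aux_end_mem_tail c' hlc')
        · right; exact h
      · rintro (rfl | h)
        · right
          have := aux_end_mem_tail c hlc
          exact this
        · right; exact h
    have hchord' : s(x, y) ∉ c'.edges := fun h => hchord (hedges.mem_iff.mp h)
    have hy' : y ∈ c'.support := (hmem y).mpr hy
    set p : G.Walk x y := c'.takeUntil y hy' with hp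
    set q : G.Walk y x := c'.dropUntil y hy' with hq
    have hspec : p.append q = c' := c'.take_spec hy'
    -- lengths
    have hlensum : p.length + q.length = c'.length := by
      rw [← SimpleGraph.Walk.length_append, hspec]
    have hlenc' : c'.length = c.length := by
      have h1 : c'.length = (c.dropUntil x hx).length + (c.takeUntil x hx).length := by
        rw [hc'def, SimpleGraph.Walk.rotate, SimpleGraph.Walk.length_append]
      have h2 : (c.takeUntil x hx).length + (c.dropUntil x hx).length = c.length := by
        rw [← SimpleGraph.Walk.length_append, c.take_spec hx]
      omega
    have hp1 : p.length ≠ 0 := fun h0 => hxy.ne (SimpleGraph.Walk.eq_of_length_eq_zero h0)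
    have hq1 : q.length ≠ 0 := fun h0 => hxy.ne (SimpleGraph.Walk.eq_of_length_eq_zero h0).symm
    have hpe : p.edges ⊆ c'.edges := c'.edges_takeUntil_subset hy'
    have hqe : q.edges ⊆ c'.edges := c'.edges_dropUntil_subset hy'
    have hp2 : p.length ≠ 1 := by
      intro h1
      exact hchord' (hpe (aux_edge_of_length_one p h1))
    have hq2 : q.length ≠ 1 := by
      intro h1
      have := hqe (aux_edge_of_length_one q h1)
      rw [Sym2.eq_swap] at this
      exact hchord' this
    -- tail decomposition
    have htails : c'.support.tail = p.support.tail ++ q.support.tail := by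
      have h := congrArg SimpleGraph.Walk.support hspec
      rw [SimpleGraph.Walk.support_append, p.support_eq_cons] at h
      rw [← h, List.cons_append, List.tail_cons]
    have hnodup : (p.support.tail ++ q.support.tail).Nodup := by
      rw [← htails]; exact hc'cyc.support_nodup
    have hxq : x ∈ q.support.tail := aux_end_mem_tail q hq1
    have hyp : y ∈ p.support.tail := aux_end_mem_tail p hp1
    have hppath : p.IsPath := by
      rw [SimpleGraph.Walk.isPath_def, p.support_eq_cons]
      refine List.nodup_cons.mpr ⟨?_, (List.Nodup.of_append_left hnodup)⟩
      intro hxp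
      exact (List.disjoint_of_nodup_append hnodup) hxp hxq
    have hqpath : q.IsPath := by
      rw [SimpleGraph.Walk.isPath_def, q.support_eq_cons]
      refine List.nodup_cons.mpr ⟨?_, (List.Nodup.of_append_right hnodup)⟩
      intro hyq
      exact (List.disjoint_of_nodup_append hnodup) hyp hyq
    -- supports are within c's support
    have hpsub : ∀ a ∈ p.support, a ∈ c.support := fun a ha =>
      (hmem a).mp (c'.support_takeUntil_subset hy' ha)
    have hqsub : ∀ a ∈ q.support, a ∈ c.support := fun a ha =>
      (hmem a).mp (c'.support_dropUntil_subset hy' ha)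
    -- t is on p or on q
    have htpq : t ∈ p.support ∨ t ∈ q.support := by
      have : t ∈ c'.support := (hmem t).mpr hts
      rw [← hspec, SimpleGraph.Walk.mem_support_append_iff] at this
      exact this
    rcases htpq with htp | htq
    · -- cycle: cons hxy.symm p : Walk y y
      refine ih (p.length + 1) ?_ y (SimpleGraph.Walk.cons hxy.symm p)
        ?_ (by simp) ?_ ⟨t, htT, by simp [htp]⟩
      · omega
      · rw [SimpleGraph.Walk.cons_isCycle_iff]
        exact ⟨hppath, fun h => hchord' (by rw [Sym2.eq_swap] at h; exact hpe h)⟩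
      · intro a ha
        simp only [SimpleGraph.Walk.support_cons, List.mem_cons] at ha
        rcases ha with rfl | ha
        · exact hS a hy
        · exact hS a (hpsub a ha)
    · -- cycle: cons hxy q : Walk x x
      refine ih (q.length + 1) ?_ x (SimpleGraph.Walk.cons hxy q)
        ?_ (by simp) ?_ ⟨t, htT, by simp [htq]⟩
      · omega
      · rw [SimpleGraph.Walk.cons_isCycle_iff]
        exact ⟨hqpath, fun h => hchord' (hqe h)⟩
      · intro a ha
        simp only [SimpleGraph.Walk.support_cons, List.mem_cons] at ha
        rcases ha with rfl | ha
        · exact hS a hx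
        · exact hS a (hqsub a ha)
  · -- short cycle: it is a triangle
    have h3 : c.length = 3 := by have := hc.three_le_length; omega
    obtain ⟨a, b, hva, hab, hbv, hsup⟩ :
        ∃ a b, G.Adj v a ∧ G.Adj a b ∧ G.Adj b v ∧ c.support = [v, a, b, v] := by
      cases c with
      | nil => simp at h3
      | cons h1 q =>
        cases q with
        | nil => simp at h3
        | cons h2 r =>
          cases r with
          | nil => simp at h3
          | cons h3' s =>
            cases s with
            | nil => exact ⟨_, _, h1, h2, h3', by simp⟩
            | cons _ _ => simp [SimpleGraph.Walk.length_cons] at h3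
    refine ⟨{v, a, b}, ⟨v, a, b, rfl, hva, hbv.symm, hab, ?_⟩, ?_⟩
    · rw [hsup] at hts
      simp only [List.mem_cons, List.not_mem_nil, or_false] at hts
      rcases hts with rfl | rfl | rfl | rfl <;> tauto
    · have h1 : v ∉ S := hS v (by rw [hsup]; simp)
      have h2 : a ∉ S := hS a (by rw [hsup]; simp)
      have h3 : b ∉ S := hS b (by rw [hsup]; simp)
      ext z
      simp only [Set.mem_inter_iff, Set.mem_insert_iff, Set.mem_singleton_iff,
        Set.mem_empty_iff_false, iff_false, not_and]
      rintro (rfl | rfl | rfl) <;> assumption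

/-- In a chordal graph `G` with terminals `T`, a set `S` is a
subset feedback vertex set w.r.t. `T` iff `G − S` contains no `T`-triangle. -/
theorem stmt0 {V : Type} [Fintype V] (G : SimpleGraph V) (T S : Set V)
    (hG : Chordal G) :
    IsSubsetFVS G T S ↔ ¬ HasTTriangleAvoiding G T S := by
  constructor
  · -- no T-cycle → no T-triangle: a triangle is a cycle
    intro hFVS htri
    obtain ⟨Δ, ⟨a, b, c, hΔ, hab, hac, hbc, hT⟩, hΔS⟩ := htri
    have haS : a ∉ S := fun h => by
      have : a ∈ Δ ∩ S := ⟨by rw [hΔ]; simp, h⟩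
      rw [hΔS] at this; exact this
    have hbS : b ∉ S := fun h => by
      have : b ∈ Δ ∩ S := ⟨by rw [hΔ]; simp, h⟩
      rw [hΔS] at this; exact this
    have hcS : c ∉ S := fun h => by
      have : c ∈ Δ ∩ S := ⟨by rw [hΔ]; simp, h⟩
      rw [hΔS] at this; exact this
    refine hFVS ⟨a, SimpleGraph.Walk.cons hab (SimpleGraph.Walk.cons hbc
      (SimpleGraph.Walk.cons hac.symm SimpleGraph.Walk.nil)), ?_, ?_, ?_⟩
    · rw [SimpleGraph.Walk.cons_isCycle_iff]
      constructor
      · rw [SimpleGraph.Walk.isPath_def]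
        simp [hbc.ne, hab.ne', hac.ne']
      · simp only [SimpleGraph.Walk.edges_cons, SimpleGraph.Walk.edges_nil,
          List.mem_cons, List.not_mem_nil, or_false]
        push_neg
        constructor
        · intro h
          rw [Sym2.eq_iff] at h
          rcases h with ⟨h1, _⟩ | ⟨h1, _⟩
          · exact hab.ne h1
          · exact hac.ne h1
        · intro h
          rw [Sym2.eq_iff] at h
          rcases h with ⟨h1, _⟩ | ⟨_, h2⟩
          · exact hac.ne h1
          · exact hbc.ne h2
    · intro x hx
      simp only [SimpleGraph.Walk.support_cons, SimpleGraph.Walk.support_nil,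
        List.mem_cons, List.not_mem_nil, or_false] at hx
      rcases hx with rfl | rfl | rfl | rfl <;> assumption
    · rcases hT with h | h | h
      · exact ⟨a, h, by simp⟩
      · exact ⟨b, h, by simp⟩
      · exact ⟨c, h, by simp⟩
  · -- no T-triangle → no T-cycle, using chordality
    intro htri hcyc
    obtain ⟨v, c, hc, hS, ht⟩ := hcyc
    exact htri (aux_key hG c.length v c hc rfl hS ht)
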